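/- (Appendix Lemma 1.) Let φ be any DL-PA formula and let v, v₁ ⊆ 𝒫 be valuations with (v, v₁) ∈ ‖copy(IN_U); vary(IN_U); φ?‖. Then E(v) = {x ∈ U : in'_x ∈ v₁}, A_v = A_{v₁} and R_v = R_{v₁}. -/

import Mathlib

noncomputable section

namespace DLPA

/-- Propositional variables: awareness, acceptance, attack, auxiliary acceptance
copies, plus countably many further auxiliary variables. -/
inductive PVar (U : Type) : Type
  | aw : U → PVar U
  | inn : U → PVar U
  | att : U → U → PVar U
  | inn' : U → PVar U
  | aux : Nat → PVar U

-- DL-PA formulas and programs, by mutual recursion.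
mutual
  inductive Form (U : Type) : Type
    | var : PVar U → Form U
    | neg : Form U → Form U
    | conj : Form U → Form U → Form U
    | box : Prog U → Form U → Form U
  inductive Prog (U : Type) : Type
    | add : PVar U → Prog U           -- +p
    | rem : PVar U → Prog U           -- −p
    | test : Form U → Prog U          -- φ?
    | seq : Prog U → Prog U → Prog U
    | choice : Prog U → Prog U → Prog U
    | conv : Prog U → Prog U
end

variable {U : Type}

/-- A valuation is a set of propositional variables. -/
abbrev Val (U : Type) := Set (PVar U)

-- Satisfaction of formulas and interpretation of programs, by mutual recursion.
mutual
  def Sat : Val U → Form U → Prop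
    | v, Form.var p => p ∈ v
    | v, Form.neg φ => ¬ Sat v φ
    | v, Form.conj φ ψ => Sat v φ ∧ Sat v ψ
    | v, Form.box π φ => ∀ w, Rel π v w → Sat w φ
  def Rel : Prog U → Val U → Val U → Prop
    | Prog.add p, v, w => w = v ∪ {p}
    | Prog.rem p, v, w => w = v \ {p}
    | Prog.test φ, v, w => w = v ∧ Sat v φ
    | Prog.seq π₁ π₂, v, w => ∃ u, Rel π₁ v u ∧ Rel π₂ u w
    | Prog.choice π₁ π₂, v, w => Rel π₁ v w ∨ Rel π₂ v w
    | Prog.conv π, v, w => Rel π w v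
end

def Form.falsum : Form U := Form.conj (Form.var (PVar.aux 0)) (Form.neg (Form.var (PVar.aux 0)))
def Form.top : Form U := Form.neg Form.falsum
def Form.impl (φ ψ : Form U) : Form U := Form.neg (Form.conj φ (Form.neg ψ))
def Form.disj (φ ψ : Form U) : Form U := Form.neg (Form.conj (Form.neg φ) (Form.neg ψ))
def Form.equiv (φ ψ : Form U) : Form U := Form.conj (Form.impl φ ψ) (Form.impl ψ φ)
def Form.dia (π : Prog U) (φ : Form U) : Form U := Form.neg (Form.box π (Form.neg φ))
def Prog.skip : Prog U := Prog.test Form.top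

/-- Sequential composition of a list of programs (`skip` for the empty list). -/
def seqList {β : Type} (f : β → Prog U) : List β → Prog U
  | [] => Prog.skip
  | p :: ps => Prog.seq (f p) (seqList f ps)

/-- Nondeterministic composition of a list of programs (`skip` for the empty list). -/
def unionList {β : Type} (f : β → Prog U) : List β → Prog U
  | [] => Prog.skip
  | [p] => f p
  | p :: ps => Prog.choice (f p) (unionList f ps)

def mkTrueOne (L : List (PVar U)) : Prog U :=
  unionList (fun p => Prog.seq (Prog.test (Form.neg (Form.var p))) (Prog.add p)) L
def mkFalseOne (L : List (PVar U)) : Prog U :=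
  unionList (fun p => Prog.seq (Prog.test (Form.var p)) (Prog.rem p)) L
def mkTrueSome (L : List (PVar U)) : Prog U :=
  seqList (fun p => Prog.choice (Prog.add p) Prog.skip) L
def mkFalseSome (L : List (PVar U)) : Prog U :=
  seqList (fun p => Prog.choice (Prog.rem p) Prog.skip) L
def vary (L : List (PVar U)) : Prog U :=
  seqList (fun p => Prog.choice (Prog.add p) (Prog.rem p)) L
/-- dis(ATT_R): for each pair (x,y) in the list, make true att_{x,y} or att_{y,x}. -/
def dis (L : List (U × U)) : Prog U :=
  seqList (fun q => Prog.choice (Prog.add (PVar.att q.1 q.2)) (Prog.add (PVar.att q.2 q.1))) L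

def conjList : List (Form U) → Form U
  | [] => Form.top
  | φ :: φs => Form.conj φ (conjList φs)
def disjList : List (Form U) → Form U
  | [] => Form.falsum
  | φ :: φs => Form.disj φ (disjList φs)

/-- The elements of a finite universe in a fixed order. -/
def enum (U : Type) [Fintype U] : List U := Finset.univ.toList

def bigConj [Fintype U] (f : U → Form U) : Form U := conjList ((enum U).map f)
def bigDisj [Fintype U] (f : U → Form U) : Form U := disjList ((enum U).map f)

def INlist (U : Type) [Fintype U] : List (PVar U) := (enum U).map PVar.inn

/-- copy(IN_U) copies the value of in_x to in'_x, for every x ∈ U. -/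
def copyIN (U : Type) [Fintype U] : Prog U :=
  seqList (fun x => Prog.choice
      (Prog.seq (Prog.test (Form.var (PVar.inn x))) (Prog.add (PVar.inn' x)))
      (Prog.seq (Prog.test (Form.neg (Form.var (PVar.inn x)))) (Prog.rem (PVar.inn' x))))
    (enum U)

def Well (U : Type) [Fintype U] : Form U :=
  bigConj (fun x => Form.impl (Form.var (PVar.inn x)) (Form.var (PVar.aw x)))

def ConFree (U : Type) [Fintype U] : Form U :=
  Form.conj (Well U) (bigConj fun x => bigConj fun y =>
    Form.neg (Form.conj (Form.var (PVar.inn x))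
      (Form.conj (Form.var (PVar.inn y)) (Form.var (PVar.att x y)))))

def AdmissibleF (U : Type) [Fintype U] : Form U :=
  Form.conj (ConFree U) (bigConj fun x => Form.impl (Form.var (PVar.inn x))
    (bigConj fun y => Form.impl (Form.conj (Form.var (PVar.aw y)) (Form.var (PVar.att y x)))
      (bigDisj fun z => Form.conj (Form.var (PVar.inn z)) (Form.var (PVar.att z y)))))

def StableF (U : Type) [Fintype U] : Form U :=
  Form.conj (Well U) (bigConj fun x => Form.impl (Form.var (PVar.aw x))
    (Form.equiv (Form.var (PVar.inn x))
      (Form.neg (bigDisj fun y => Form.conj (Form.var (PVar.inn y)) (Form.var (PVar.att y x))))))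

def CompleteF (U : Type) [Fintype U] : Form U :=
  Form.conj (ConFree U) (bigConj fun x => Form.equiv (Form.var (PVar.inn x))
    (bigConj fun y => Form.impl (Form.conj (Form.var (PVar.aw y)) (Form.var (PVar.att y x)))
      (bigDisj fun z => Form.conj (Form.var (PVar.inn z)) (Form.var (PVar.att z y)))))

def GroundedF (U : Type) [Fintype U] : Form U :=
  Form.conj (CompleteF U)
    (Form.box (Prog.seq (mkFalseOne (INlist U)) (mkFalseSome (INlist U))) (Form.neg (CompleteF U)))

def PreferredF (U : Type) [Fintype U] : Form U :=
  Form.conj (AdmissibleF U)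
    (Form.box (Prog.seq (mkTrueOne (INlist U)) (mkTrueSome (INlist U))) (Form.neg (AdmissibleF U)))

def NaiveF (U : Type) [Fintype U] : Form U :=
  Form.conj (ConFree U) (Form.box (mkTrueOne (INlist U)) (Form.neg (ConFree U)))

def IncludedInCp (U : Type) [Fintype U] : Form U :=
  bigConj fun x => Form.impl
    (Form.disj (Form.var (PVar.inn x)) (Form.conj (Form.var (PVar.aw x))
      (bigDisj fun y => Form.conj (Form.var (PVar.inn y)) (Form.var (PVar.att y x)))))
    (Form.disj (Form.var (PVar.inn' x)) (Form.conj (Form.var (PVar.aw x))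
      (bigDisj fun y => Form.conj (Form.var (PVar.inn' y)) (Form.var (PVar.att y x)))))

def IncludesCp (U : Type) [Fintype U] : Form U :=
  bigConj fun x => Form.impl
    (Form.disj (Form.var (PVar.inn' x)) (Form.conj (Form.var (PVar.aw x))
      (bigDisj fun y => Form.conj (Form.var (PVar.inn' y)) (Form.var (PVar.att y x)))))
    (Form.disj (Form.var (PVar.inn x)) (Form.conj (Form.var (PVar.aw x))
      (bigDisj fun y => Form.conj (Form.var (PVar.inn y)) (Form.var (PVar.att y x)))))

/-- makeExt^σ = vary(IN_U); φ_σ? -/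
def makeExt (U : Type) [Fintype U] (φ : Form U) : Prog U :=
  Prog.seq (vary (INlist U)) (Prog.test φ)

def SemiStableF (U : Type) [Fintype U] : Form U :=
  Form.conj (CompleteF U)
    (Form.box (Prog.seq (copyIN U) (makeExt U (CompleteF U)))
      (Form.impl (IncludesCp U) (IncludedInCp U)))

/-- A_v -/
def Av (v : Val U) : Set U := {x | PVar.aw x ∈ v}
/-- R_v -/
def Rv (v : Val U) : Set (U × U) := {q | q.1 ∈ Av v ∧ q.2 ∈ Av v ∧ PVar.att q.1 q.2 ∈ v}
/-- E(v) -/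
def Ev (v : Val U) : Set U := {x | PVar.inn x ∈ v}
/-- {x ∈ U : in'_x ∈ v} -/
def Cv (v : Val U) : Set U := {x | PVar.inn' x ∈ v}
/-- v_(A,R) = AW_A ∪ ATT_R -/
def valOf (A : Set U) (R : Set (U × U)) : Val U :=
  (PVar.aw '' A) ∪ ((fun q : U × U => PVar.att q.1 q.2) '' R)

/-- E⁺, the set of arguments of A attacked by E in (A,R). -/
def attacked (A : Set U) (R : Set (U × U)) (E : Set U) : Set U :=
  {x ∈ A | ∃ y ∈ E, (y, x) ∈ R}
/-- E⊕ = E ∪ E⁺, the range of E. -/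
def rangeOf (A : Set U) (R : Set (U × U)) (E : Set U) : Set U :=
  E ∪ attacked A R E

def IsConflictFree (A : Set U) (R : Set (U × U)) (E : Set U) : Prop :=
  E ⊆ A ∧ E ∩ attacked A R E = ∅
def Defends (A : Set U) (R : Set (U × U)) (E : Set U) (a : U) : Prop :=
  ∀ x ∈ A, (x, a) ∈ R → x ∈ attacked A R E
def IsAdmissibleExt (A : Set U) (R : Set (U × U)) (E : Set U) : Prop :=
  IsConflictFree A R E ∧ ∀ a ∈ E, Defends A R E a
def IsStableExt (A : Set U) (R : Set (U × U)) (E : Set U) : Prop :=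
  IsConflictFree A R E ∧ A \ E ⊆ attacked A R E
def IsCompleteExt (A : Set U) (R : Set (U × U)) (E : Set U) : Prop :=
  IsConflictFree A R E ∧ E = {a ∈ A | Defends A R E a}
def IsGroundedExt (A : Set U) (R : Set (U × U)) (E : Set U) : Prop :=
  IsCompleteExt A R E ∧ ∀ E', IsCompleteExt A R E' → E' ⊆ E → E' = E
def IsPreferredExt (A : Set U) (R : Set (U × U)) (E : Set U) : Prop :=
  IsCompleteExt A R E ∧ ∀ E', IsCompleteExt A R E' → E ⊆ E' → E' = E
def IsNaiveExt (A : Set U) (R : Set (U × U)) (E : Set U) : Prop :=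
  IsConflictFree A R E ∧ ∀ E', IsConflictFree A R E' → E ⊆ E' → E' = E
def IsSemiStableExt (A : Set U) (R : Set (U × U)) (E : Set U) : Prop :=
  IsCompleteExt A R E ∧ ¬ ∃ E', IsCompleteExt A R E' ∧ rangeOf A R E ⊂ rangeOf A R E'

end DLPA

end

open DLPA

section Aux

variable {U : Type}

lemma copy_correct (L : List U) :
    ∀ v w : Val U, DLPA.Rel (seqList (fun x => Prog.choice
      (Prog.seq (Prog.test (Form.var (PVar.inn x))) (Prog.add (PVar.inn' x)))
      (Prog.seq (Prog.test (Form.neg (Form.var (PVar.inn x)))) (Prog.rem (PVar.inn' x)))) L) v w →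
      (∀ p : PVar U, (∀ y : U, p ≠ PVar.inn' y) → (p ∈ w ↔ p ∈ v)) ∧
      (∀ x, x ∈ L → (PVar.inn' x ∈ w ↔ PVar.inn x ∈ v)) ∧
      (∀ x, x ∉ L → (PVar.inn' x ∈ w ↔ PVar.inn' x ∈ v)) := by
  induction L with
  | nil =>
    intro v w h
    simp only [seqList, Prog.skip, DLPA.Rel, Sat, Form.top, Form.falsum] at h
    obtain ⟨hw, -⟩ := h
    subst hw
    simp
  | cons a L ih =>
    intro v w h
    simp only [seqList, DLPA.Rel] at h
    obtain ⟨u, hstep, hrest⟩ := h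
    obtain ⟨h1, h2, h3⟩ := ih u w hrest
    have hinn : ∀ x : U, (PVar.inn x ∈ u ↔ PVar.inn x ∈ v) := by
      intro x
      rcases hstep with ⟨u', ⟨rfl, -⟩, rfl⟩ | ⟨u', ⟨rfl, -⟩, rfl⟩ <;> simp
    have hother : ∀ p : PVar U, (∀ y : U, p ≠ PVar.inn' y) → (p ∈ u ↔ p ∈ v) := by
      intro p hp
      rcases hstep with ⟨u', ⟨rfl, -⟩, rfl⟩ | ⟨u', ⟨rfl, -⟩, rfl⟩ <;>
        simp [hp a]
    have hinn'a : (PVar.inn' a ∈ u ↔ PVar.inn a ∈ v) := by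
      rcases hstep with ⟨u', ⟨rfl, hs⟩, rfl⟩ | ⟨u', ⟨rfl, hs⟩, rfl⟩ <;>
        simp_all [Sat]
    have hinn'x : ∀ x : U, x ≠ a → (PVar.inn' x ∈ u ↔ PVar.inn' x ∈ v) := by
      intro x hx
      rcases hstep with ⟨u', ⟨rfl, -⟩, rfl⟩ | ⟨u', ⟨rfl, -⟩, rfl⟩ <;> simp [hx]
    refine ⟨fun p hp => (h1 p hp).trans (hother p hp), ?_, ?_⟩
    · intro x hx
      rcases List.mem_cons.mp hx with rfl | hx'
      · by_cases hmem : x ∈ L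
        · exact (h2 x hmem).trans (hinn x)
        · exact ((h3 x hmem).trans hinn'a)
      · exact (h2 x hx').trans (hinn x)
    · intro x hx
      have hxa : x ≠ a := fun e => hx (e ▸ (List.mem_cons_self : a ∈ a :: L))
      have hxL : x ∉ L := fun e => hx (List.mem_cons_of_mem a e)
      exact (h3 x hxL).trans (hinn'x x hxa)

lemma vary_preserve (L : List (PVar U)) :
    ∀ v w : Val U, DLPA.Rel (vary L) v w →
      ∀ p : PVar U, p ∉ L → (p ∈ w ↔ p ∈ v) := by
  induction L with
  | nil =>
    intro v w h p _
    simp only [vary, seqList, Prog.skip, DLPA.Rel, Sat, Form.top, Form.falsum] at h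
    obtain ⟨hw, -⟩ := h
    subst hw; rfl
  | cons a L ih =>
    intro v w h p hp
    simp only [vary, seqList, DLPA.Rel] at h
    obtain ⟨u, hstep, hrest⟩ := h
    have hpa : p ≠ a := fun e => hp (e ▸ (List.mem_cons_self : a ∈ a :: L))
    have hpL : p ∉ L := fun e => hp (List.mem_cons_of_mem a e)
    have h1 := ih u w hrest p hpL
    rcases hstep with rfl | rfl <;> simp_all

end Aux

/-- Appendix Lemma 1. -/
theorem copy_vary_test_lemma
    (U : Type) [Fintype U] [Nonempty U] (φ : Form U) (v v₁ : Val U)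
    (h : Rel (Prog.seq (copyIN U) (Prog.seq (vary (INlist U)) (Prog.test φ))) v v₁) :
    Ev v = Cv v₁ ∧ Av v = Av v₁ ∧ Rv v = Rv v₁ := by
  simp only [DLPA.Rel] at h
  obtain ⟨u, hcopy, u', hvary, rfl, -⟩ := h
  obtain ⟨h1, h2, -⟩ := copy_correct (enum U) v u hcopy
  have hnotin : ∀ p : PVar U, (∀ y : U, p ≠ PVar.inn y) → p ∉ INlist U := by
    intro p hp hmem
    simp only [INlist, List.mem_map] at hmem
    obtain ⟨y, -, rfl⟩ := hmem
    exact hp y rfl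
  have hv : ∀ p : PVar U, (∀ y : U, p ≠ PVar.inn y) → (p ∈ v₁ ↔ p ∈ u) :=
    fun p hp => vary_preserve (INlist U) u v₁ hvary p (hnotin p hp)
  have hmem : ∀ x : U, x ∈ enum U := fun x => by
    simp [enum, Finset.mem_toList]
  refine ⟨?_, ?_, ?_⟩
  · ext x
    simp only [Ev, Cv, Set.mem_setOf_eq]
    rw [hv (PVar.inn' x) (fun y => by simp), h2 x (hmem x)]
  · ext x
    simp only [Av, Set.mem_setOf_eq]
    rw [hv (PVar.aw x) (fun y => by simp), h1 (PVar.aw x) (fun y => by simp)]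
  · ext q
    simp only [Rv, Av, Set.mem_setOf_eq]
    rw [hv (PVar.aw q.1) (fun y => by simp), h1 (PVar.aw q.1) (fun y => by simp),
        hv (PVar.aw q.2) (fun y => by simp), h1 (PVar.aw q.2) (fun y => by simp),
        hv (PVar.att q.1 q.2) (fun y => by simp), h1 (PVar.att q.1 q.2) (fun y => by simp)]
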